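/- If additionally a·h < λ, then the graph G := {(x, y, ψ(x,y)) : (x,y) ∈ [0,π] × [0,y_∞]} ⊆ ℝ³ has finite 2-dimensional Hausdorff measure: H²(G) < ∞. -/

import Mathlib

open Real MeasureTheory Set Filter
open scoped ENNReal NNReal Topology

noncomputable section

namespace StokesCounterexample

/-- `ySeq a k = Σ_{j=1}^k a^j` (so `ySeq a 0 = 0`). -/
def ySeq (a : ℝ) (k : ℕ) : ℝ := ∑ j ∈ Finset.range k, a ^ (j + 1)

/-- `yInf a = Σ_{j=1}^∞ a^j = a / (1 - a)`. -/
def yInf (a : ℝ) : ℝ := a / (1 - a)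

/-- `fSeq h l 0 = 0` and `fSeq h l k x = h^k · sin (x / l^k)` for `k ≥ 1`. -/
def fSeq (h l : ℝ) (k : ℕ) (x : ℝ) : ℝ :=
  if k = 0 then 0 else h ^ k * Real.sin (x / l ^ k)

open Classical in
/-- The interpolation `ψ(x,y) = (1 - φ_k(y))·f_k(x) + φ_k(y)·f_{k+1}(x)` for
`y ∈ [y_k, y_{k+1})`, where `φ_k(y) = φ((y - y_k)/a^(k+1))`, extended by `0`
outside of `⋃_k [y_k, y_{k+1})` (in particular `ψ(x, y_∞) = 0`). -/
def psi (a h l : ℝ) (φ : ℝ → ℝ) (x y : ℝ) : ℝ :=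
  if hk : ∃ k : ℕ, ySeq a k ≤ y ∧ y < ySeq a (k + 1) then
    (1 - φ ((y - ySeq a hk.choose) / a ^ (hk.choose + 1))) * fSeq h l hk.choose x
      + φ ((y - ySeq a hk.choose) / a ^ (hk.choose + 1)) * fSeq h l (hk.choose + 1) x
  else 0

/- ### auxiliary lemmas -/

lemma abs_sin_sub_sin (u v : ℝ) : |Real.sin u - Real.sin v| ≤ |u - v| := by
  rw [Real.sin_sub_sin]
  have h1 : |Real.sin ((u - v) / 2)| ≤ |(u - v) / 2| := Real.abs_sin_le_abs
  have h2 : |Real.cos ((u + v) / 2)| ≤ 1 := Real.abs_cos_le_one _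
  have h3 : |(u - v) / 2| = |u - v| / 2 := by rw [abs_div, abs_two]
  have h4 : |2 * Real.sin ((u - v) / 2) * Real.cos ((u + v) / 2)|
      = 2 * (|Real.sin ((u - v) / 2)| * |Real.cos ((u + v) / 2)|) := by
    rw [abs_mul, abs_mul, abs_two, mul_assoc]
  rw [h4]
  nlinarith [abs_nonneg (Real.sin ((u - v) / 2)), abs_nonneg (Real.cos ((u + v) / 2))]

lemma ySeq_succ (a : ℝ) (k : ℕ) : ySeq a (k + 1) = ySeq a k + a ^ (k + 1) :=
  Finset.sum_range_succ _ _

lemma ySeq_strictMono {a : ℝ} (ha0 : 0 < a) : StrictMono (ySeq a) := by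
  apply strictMono_nat_of_lt_succ
  intro k
  rw [ySeq_succ]
  nlinarith [pow_pos ha0 (k + 1)]

lemma ySeq_eq {a : ℝ} (ha1 : a < 1) (k : ℕ) : ySeq a k = (a - a ^ (k + 1)) / (1 - a) := by
  induction k with
  | zero =>
    rw [show ySeq a 0 = 0 from Finset.sum_range_zero _, pow_one, sub_self, zero_div]
  | succ k ih =>
    rw [ySeq_succ, ih]
    have hne : (1:ℝ) - a ≠ 0 := by linarith
    field_simp
    ring

lemma yInf_sub_ySeq {a : ℝ} (ha1 : a < 1) (k : ℕ) :
    yInf a - ySeq a k = a ^ (k + 1) / (1 - a) := by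
  rw [ySeq_eq ha1, yInf]
  have : (1 : ℝ) - a ≠ 0 := by linarith
  field_simp
  ring

lemma ySeq_le_yInf {a : ℝ} (ha0 : 0 < a) (ha1 : a < 1) (k : ℕ) : ySeq a k ≤ yInf a := by
  have h := yInf_sub_ySeq ha1 k
  have ha' : (0:ℝ) < 1 - a := by linarith
  have h1 : 0 < a ^ (k + 1) / (1 - a) := by positivity
  linarith

lemma strip_unique {a : ℝ} (ha0 : 0 < a) {y : ℝ} {k k' : ℕ}
    (h1 : ySeq a k ≤ y) (h2 : y < ySeq a (k + 1))
    (h1' : ySeq a k' ≤ y) (h2' : y < ySeq a (k' + 1)) : k = k' := by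
  by_contra hne
  rcases Nat.lt_or_ge k k' with hlt | hge
  · have : ySeq a (k + 1) ≤ ySeq a k' := (ySeq_strictMono ha0).monotone hlt
    linarith
  · have hlt : k' < k := lt_of_le_of_ne hge (Ne.symm hne)
    have : ySeq a (k' + 1) ≤ ySeq a k := (ySeq_strictMono ha0).monotone hlt
    linarith

lemma psi_eq_of_strip {a : ℝ} (ha0 : 0 < a) (h l : ℝ) (φ : ℝ → ℝ) {y : ℝ} {k : ℕ}
    (h1 : ySeq a k ≤ y) (h2 : y < ySeq a (k + 1)) (x : ℝ) :
    psi a h l φ x y =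
      (1 - φ ((y - ySeq a k) / a ^ (k + 1))) * fSeq h l k x
        + φ ((y - ySeq a k) / a ^ (k + 1)) * fSeq h l (k + 1) x := by
  unfold psi
  split
  · rename_i hex
    obtain ⟨h1', h2'⟩ := hex.choose_spec
    have hk : hex.choose = k := strip_unique ha0 h1' h2' h1 h2
    rw [hk]
  · rename_i hex
    exact absurd ⟨k, h1, h2⟩ hex

lemma psi_eq_zero (a h l : ℝ) (φ : ℝ → ℝ) {y : ℝ}
    (hy : ¬∃ k : ℕ, ySeq a k ≤ y ∧ y < ySeq a (k + 1)) (x : ℝ) :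
    psi a h l φ x y = 0 := by
  unfold psi
  split
  · rename_i hex; exact absurd hex hy
  · rfl

lemma exists_strip_of_lt {a : ℝ} {y : ℝ} :
    ∀ K : ℕ, 0 ≤ y → y < ySeq a K → ∃ k < K, ySeq a k ≤ y ∧ y < ySeq a (k + 1) := by
  intro K
  induction K with
  | zero => intro h0 hK; rw [show ySeq a 0 = 0 from Finset.sum_range_zero _] at hK; exact absurd hK (by linarith)
  | succ K ih =>
    intro h0 hK
    by_cases hy : y < ySeq a K
    · obtain ⟨k, hk, hs⟩ := ih h0 hy
      exact ⟨k, Nat.lt_succ_of_lt hk, hs⟩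
    · exact ⟨K, Nat.lt_succ_self K, le_of_not_gt hy, hK⟩

lemma abs_fSeq_le {h : ℝ} (hh0 : 0 < h) (l : ℝ) (k : ℕ) (x : ℝ) :
    |fSeq h l k x| ≤ h ^ k := by
  unfold fSeq
  split
  · simp; positivity
  · rw [abs_mul, abs_of_pos (pow_pos hh0 k)]
    calc h ^ k * |Real.sin (x / l ^ k)| ≤ h ^ k * 1 := by
          gcongr; exact Real.abs_sin_le_one _
      _ = h ^ k := mul_one _

lemma fSeq_lip {h l : ℝ} (hh0 : 0 < h) (hl0 : 0 < l) (k : ℕ) (x x' : ℝ) :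
    |fSeq h l k x - fSeq h l k x'| ≤ (h / l) ^ k * |x - x'| := by
  unfold fSeq
  split
  · simp; positivity
  · rw [← mul_sub, abs_mul, abs_of_pos (pow_pos hh0 k)]
    have hsin : |Real.sin (x / l ^ k) - Real.sin (x' / l ^ k)| ≤ |x - x'| / l ^ k := by
      have := abs_sin_sub_sin (x / l ^ k) (x' / l ^ k)
      rwa [div_sub_div_same, abs_div, abs_of_pos (pow_pos hl0 k)] at this
    calc h ^ k * |Real.sin (x / l ^ k) - Real.sin (x' / l ^ k)|
        ≤ h ^ k * (|x - x'| / l ^ k) := by gcongr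
      _ = (h / l) ^ k * |x - x'| := by rw [div_pow, div_mul_eq_mul_div, mul_comm (h^k)]; ring


/-- Lipschitz constant of `ψ(·,y)` on strip `k`. -/
def Dk (h l : ℝ) (k : ℕ) : ℝ := (h / l) ^ k + (h / l) ^ (k + 1)

lemma Dk_nonneg {h l : ℝ} (hh0 : 0 < h) (hl0 : 0 < l) (k : ℕ) : 0 ≤ Dk h l k := by
  unfold Dk; positivity

section PsiEstimates

variable {a h l : ℝ} {φ : ℝ → ℝ} (ha0 : 0 < a) (hh0 : 0 < h) (hh1 : h < 1) (hl0 : 0 < l)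
  (hφ01 : ∀ t, φ t ∈ Set.Icc (0:ℝ) 1)

include ha0 hh0 hh1 hφ01 in
lemma abs_psi_le_strip {y : ℝ} {k : ℕ}
    (h1 : ySeq a k ≤ y) (h2 : y < ySeq a (k + 1)) (x : ℝ) :
    |psi a h l φ x y| ≤ h ^ k := by
  rw [psi_eq_of_strip ha0 h l φ h1 h2 x]
  set t := φ ((y - ySeq a k) / a ^ (k + 1)) with ht
  obtain ⟨ht0, ht1⟩ := hφ01 ((y - ySeq a k) / a ^ (k + 1))
  have hf1 := abs_fSeq_le hh0 l k x
  have hf2 := abs_fSeq_le hh0 l (k+1) x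
  have hk1 : h ^ (k+1) ≤ h ^ k :=
    pow_le_pow_of_le_one (le_of_lt hh0) (le_of_lt hh1) (Nat.le_succ k)
  calc |(1 - t) * fSeq h l k x + t * fSeq h l (k + 1) x|
      ≤ |(1 - t) * fSeq h l k x| + |t * fSeq h l (k + 1) x| := abs_add_le _ _
    _ = (1 - t) * |fSeq h l k x| + t * |fSeq h l (k + 1) x| := by
        rw [abs_mul, abs_mul, abs_of_nonneg (by linarith : (0:ℝ) ≤ 1 - t), abs_of_nonneg ht0]
    _ ≤ (1 - t) * h ^ k + t * h ^ k := by
        gcongr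
        · linarith
    _ = h ^ k := by ring

include ha0 hh0 hl0 hφ01 in
lemma psi_lip_x {y : ℝ} {k : ℕ}
    (h1 : ySeq a k ≤ y) (h2 : y < ySeq a (k + 1)) (x x' : ℝ) :
    |psi a h l φ x y - psi a h l φ x' y| ≤ Dk h l k * |x - x'| := by
  rw [psi_eq_of_strip ha0 h l φ h1 h2 x, psi_eq_of_strip ha0 h l φ h1 h2 x']
  set t := φ ((y - ySeq a k) / a ^ (k + 1)) with ht
  obtain ⟨ht0, ht1⟩ := hφ01 ((y - ySeq a k) / a ^ (k + 1))
  have e : (1 - t) * fSeq h l k x + t * fSeq h l (k + 1) x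
      - ((1 - t) * fSeq h l k x' + t * fSeq h l (k + 1) x')
      = (1 - t) * (fSeq h l k x - fSeq h l k x') + t * (fSeq h l (k+1) x - fSeq h l (k+1) x') := by
    ring
  rw [e]
  have hf1 := fSeq_lip hh0 hl0 k x x'
  have hf2 := fSeq_lip hh0 hl0 (k+1) x x'
  calc |(1 - t) * (fSeq h l k x - fSeq h l k x') + t * (fSeq h l (k+1) x - fSeq h l (k+1) x')|
      ≤ (1 - t) * |fSeq h l k x - fSeq h l k x'| + t * |fSeq h l (k+1) x - fSeq h l (k+1) x'| := by
        refine le_trans (abs_add_le _ _) ?_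
        rw [abs_mul, abs_mul, abs_of_nonneg (by linarith : (0:ℝ) ≤ 1 - t), abs_of_nonneg ht0]
    _ ≤ 1 * ((h/l) ^ k * |x - x'|) + 1 * ((h/l) ^ (k+1) * |x - x'|) := by
        have g1 : (1 - t) * |fSeq h l k x - fSeq h l k x'| ≤ 1 * ((h/l) ^ k * |x - x'|) := by
          have := mul_le_mul (by linarith : (1:ℝ) - t ≤ 1) hf1 (abs_nonneg _) zero_le_one
          linarith
        have g2 : t * |fSeq h l (k+1) x - fSeq h l (k+1) x'| ≤ 1 * ((h/l) ^ (k+1) * |x - x'|) := by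
          have := mul_le_mul ht1 hf2 (abs_nonneg _) zero_le_one
          linarith
        linarith
    _ = Dk h l k * |x - x'| := by unfold Dk; ring

include ha0 hh0 hh1 hφ01 hφ01 in
lemma psi_sub_y {y y' : ℝ} {k : ℕ}
    (h1 : ySeq a k ≤ y) (h2 : y < ySeq a (k + 1))
    (h1' : ySeq a k ≤ y') (h2' : y' < ySeq a (k + 1)) (hmono : Monotone φ) (hyy : y' ≤ y) (x : ℝ) :
    |psi a h l φ x y - psi a h l φ x y'| ≤
      (φ ((y - ySeq a k) / a ^ (k + 1)) - φ ((y' - ySeq a k) / a ^ (k + 1))) * (2 * h ^ k) := by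
  rw [psi_eq_of_strip ha0 h l φ h1 h2 x, psi_eq_of_strip ha0 h l φ h1' h2' x]
  set t := φ ((y - ySeq a k) / a ^ (k + 1)) with ht
  set t' := φ ((y' - ySeq a k) / a ^ (k + 1)) with ht'
  have e : (1 - t) * fSeq h l k x + t * fSeq h l (k + 1) x
      - ((1 - t') * fSeq h l k x + t' * fSeq h l (k + 1) x)
      = (t - t') * (fSeq h l (k+1) x - fSeq h l k x) := by ring
  have htt : t' ≤ t := by
    apply hmono
    have hpow : (0:ℝ) < a ^ (k+1) := pow_pos ha0 _
    exact div_le_div_of_nonneg_right (by linarith) hpow.le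
  have hk1 : h ^ (k+1) ≤ h ^ k :=
    pow_le_pow_of_le_one (le_of_lt hh0) (le_of_lt hh1) (Nat.le_succ k)
  have hfd : |fSeq h l (k+1) x - fSeq h l k x| ≤ 2 * h ^ k := by
    calc |fSeq h l (k+1) x - fSeq h l k x| ≤ |fSeq h l (k+1) x| + |fSeq h l k x| := abs_sub _ _
      _ ≤ h ^ (k+1) + h ^ k := add_le_add (abs_fSeq_le hh0 l (k+1) x) (abs_fSeq_le hh0 l k x)
      _ ≤ 2 * h ^ k := by linarith
  rw [e, abs_mul, abs_of_nonneg (by linarith : (0:ℝ) ≤ t - t')]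
  exact mul_le_mul_of_nonneg_left hfd (by linarith)

end PsiEstimates

/- ### Euclidean space helpers -/

abbrev E3 : Type := EuclideanSpace ℝ (Fin 3)

def pt (x y z : ℝ) : E3 := (WithLp.equiv 2 (Fin 3 → ℝ)).symm ![x, y, z]

lemma dist_pt_le {x y z x' y' z' δ : ℝ} (hδ : 0 ≤ δ)
    (hx : |x - x'| ≤ δ) (hy : |y - y'| ≤ δ) (hz : |z - z'| ≤ δ) :
    dist (pt x y z) (pt x' y' z') ≤ 2 * δ := by
  rw [EuclideanSpace.dist_eq]
  have hcoord : ∀ i : Fin 3, dist (pt x y z i) (pt x' y' z' i) ^ 2 ≤ δ ^ 2 := by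
    intro i
    have habs : ∀ u v : ℝ, |u - v| ≤ δ → dist u v ^ 2 ≤ δ ^ 2 := by
      intro u v huv
      rw [Real.dist_eq]
      exact pow_le_pow_left₀ (abs_nonneg _) huv 2
    fin_cases i
    · simpa [pt] using habs x x' hx
    · simpa [pt] using habs y y' hy
    · simpa [pt] using habs z z' hz
  calc √(∑ i, dist (pt x y z i) (pt x' y' z' i) ^ 2)
      ≤ √(3 * δ ^ 2) := by
        apply Real.sqrt_le_sqrt
        calc ∑ i, dist (pt x y z i) (pt x' y' z' i) ^ 2
            ≤ ∑ _i : Fin 3, δ ^ 2 := Finset.sum_le_sum (fun i _ => hcoord i)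
          _ = 3 * δ ^ 2 := by rw [Finset.sum_const]; simp
    _ ≤ √((2*δ) ^ 2) := by apply Real.sqrt_le_sqrt; nlinarith
    _ = 2 * δ := Real.sqrt_sq (by linarith)

lemma ediam_ball_le {c : E3} {δ : ℝ} (hδ : 0 ≤ δ) :
    EMetric.diam (Metric.closedBall c (2 * δ)) ≤ ENNReal.ofReal (4 * δ) := by
  apply Metric.ediam_le_of_forall_dist_le
  intro p hp q hq
  rw [Metric.mem_closedBall] at hp hq
  calc dist p q ≤ dist p c + dist c q := dist_triangle _ _ _
    _ ≤ 2 * δ + 2 * δ := add_le_add hp (by rwa [dist_comm])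
    _ = 4 * δ := by ring

/- ### the covering -/

def Nx (δ : ℝ) : ℕ := ⌊π / δ⌋₊ + 1

def Ny (a δ : ℝ) (k : ℕ) : ℕ := ⌊a ^ (k + 1) / δ⌋₊ + 1

def Bm (a h : ℝ) (φ : ℝ → ℝ) (δ : ℝ) (k m : ℕ) : ℝ :=
  2 * h ^ k * (φ (((m : ℝ) + 1) * δ / a ^ (k + 1)) - φ ((m : ℝ) * δ / a ^ (k + 1)))

def Rkm (a h l : ℝ) (φ : ℝ → ℝ) (δ : ℝ) (k m : ℕ) : ℝ :=
  min (Dk h l k * δ + Bm a h φ δ k m) (2 * h ^ k)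

def Pkm (a h l : ℝ) (φ : ℝ → ℝ) (δ : ℝ) (k m : ℕ) : ℕ :=
  ⌊2 * Rkm a h l φ δ k m / δ⌋₊ + 1

def Kst (a h l δ : ℝ) : ℕ :=
  sInf {K : ℕ | a ^ (K + 1) < δ ∧ l ^ (K + 1) < δ ∧ h ^ K < δ}

def cov (a h l : ℝ) (φ : ℝ → ℝ) (δ : ℝ) (q : ℕ × ℕ × ℕ × ℕ) : Set E3 :=
  if q.1 < Kst a h l δ then
    if q.2.1 < Nx δ ∧ q.2.2.1 < Ny a δ q.1 ∧ q.2.2.2 < Pkm a h l φ δ q.1 q.2.2.1 then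
      Metric.closedBall
        (pt ((q.2.1 : ℝ) * δ) (ySeq a q.1 + (q.2.2.1 : ℝ) * δ)
          (psi a h l φ ((q.2.1 : ℝ) * δ) (ySeq a q.1 + (q.2.2.1 : ℝ) * δ)
            - Rkm a h l φ δ q.1 q.2.2.1 + (q.2.2.2 : ℝ) * δ)) (2 * δ)
    else ∅
  else if q.1 = Kst a h l δ ∧ q.2.1 < Nx δ
      ∧ q.2.2.1 < ⌊(yInf a - ySeq a (Kst a h l δ)) / δ⌋₊ + 1 ∧ q.2.2.2 = 0 then
    Metric.closedBall (pt ((q.2.1 : ℝ) * δ) (ySeq a (Kst a h l δ) + (q.2.2.1 : ℝ) * δ) 0) (2 * δ)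
  else ∅

lemma Kst_spec {a h l δ : ℝ} (ha0 : 0 < a) (ha1 : a < 1) (hh0 : 0 < h) (hh1 : h < 1)
    (hl0 : 0 < l) (hl1 : l < 1) (hδ : 0 < δ) :
    a ^ (Kst a h l δ + 1) < δ ∧ l ^ (Kst a h l δ + 1) < δ ∧ h ^ (Kst a h l δ) < δ := by
  have hne : {K : ℕ | a ^ (K + 1) < δ ∧ l ^ (K + 1) < δ ∧ h ^ K < δ}.Nonempty := by
    obtain ⟨na, hna⟩ := exists_pow_lt_of_lt_one hδ ha1
    obtain ⟨nl, hnl⟩ := exists_pow_lt_of_lt_one hδ hl1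
    obtain ⟨nh, hnh⟩ := exists_pow_lt_of_lt_one hδ hh1
    refine ⟨max (max na nl) nh, ?_, ?_, ?_⟩
    · exact lt_of_le_of_lt
        (pow_le_pow_of_le_one ha0.le ha1.le
          (le_trans (le_max_left na nl) (le_trans (le_max_left _ nh) (Nat.le_succ _)))) hna
    · exact lt_of_le_of_lt
        (pow_le_pow_of_le_one hl0.le hl1.le
          (le_trans (le_max_right na nl) (le_trans (le_max_left _ nh) (Nat.le_succ _)))) hnl
    · exact lt_of_le_of_lt
        (pow_le_pow_of_le_one hh0.le hh1.le (le_max_right _ nh)) hnh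
  exact Nat.sInf_mem hne

lemma Kst_min {a h l δ : ℝ} {k : ℕ} (hk : k < Kst a h l δ) :
    δ ≤ a ^ (k + 1) ∨ δ ≤ l ^ (k + 1) ∨ δ ≤ h ^ k := by
  have := Nat.notMem_of_lt_sInf hk
  simp only [Set.mem_setOf_eq, not_and_or, not_lt] at this
  tauto

section Cover

variable {a h l δ : ℝ} {φ : ℝ → ℝ}

lemma floor_facts {u δ : ℝ} (hδ : 0 < δ) (hu : 0 ≤ u) :
    (⌊u / δ⌋₊ : ℝ) * δ ≤ u ∧ u < ((⌊u / δ⌋₊ : ℝ) + 1) * δ := by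
  constructor
  · have h1 : (⌊u / δ⌋₊ : ℝ) ≤ u / δ := Nat.floor_le (by positivity)
    calc (⌊u / δ⌋₊ : ℝ) * δ ≤ (u / δ) * δ := by gcongr
      _ = u := by field_simp
  · have h2 : u / δ < (⌊u / δ⌋₊ : ℝ) + 1 := Nat.lt_floor_add_one _
    calc u = (u / δ) * δ := by field_simp
      _ < ((⌊u / δ⌋₊ : ℝ) + 1) * δ := by gcongr

lemma cover_strip (ha0 : 0 < a) (hh0 : 0 < h) (hh1 : h < 1) (hl0 : 0 < l)
    (hφ01 : ∀ t, φ t ∈ Set.Icc (0:ℝ) 1) (hφmono : Monotone φ) (hδ0 : 0 < δ)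
    {x y : ℝ} {k : ℕ} (hx0 : 0 ≤ x) (hxπ : x ≤ π) (hk : k < Kst a h l δ)
    (h1 : ySeq a k ≤ y) (h2 : y < ySeq a (k + 1)) :
    ∃ q, pt x y (psi a h l φ x y) ∈ cov a h l φ δ q := by
  set i := ⌊x / δ⌋₊ with hidef
  set m := ⌊(y - ySeq a k) / δ⌋₊ with hmdef
  set ym := ySeq a k + (m : ℝ) * δ with hymdef
  set c := psi a h l φ ((i : ℝ) * δ) ym with hcdef
  set R := Rkm a h l φ δ k m with hRdef
  set p := ⌊(psi a h l φ x y - (c - R)) / δ⌋₊ with hpdef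
  obtain ⟨hxlo, hxhi⟩ := floor_facts hδ0 hx0
  have hy0 : (0:ℝ) ≤ y - ySeq a k := by linarith
  obtain ⟨hmlo, hmhi⟩ := floor_facts hδ0 hy0
  have hiNx : i < Nx δ := by
    have : (⌊x / δ⌋₊ : ℕ) ≤ ⌊π / δ⌋₊ := Nat.floor_mono (by gcongr)
    exact Nat.lt_succ_of_le this
  have hyk : y - ySeq a k < a ^ (k + 1) := by
    have := ySeq_succ a k; linarith
  have hmNy : m < Ny a δ k := by
    have : (⌊(y - ySeq a k) / δ⌋₊ : ℕ) ≤ ⌊a ^ (k+1) / δ⌋₊ := Nat.floor_mono (by gcongr)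
    exact Nat.lt_succ_of_le this
  have hym1 : ySeq a k ≤ ym := by
    have : (0:ℝ) ≤ (m : ℝ) * δ := by positivity
    simp only [hymdef]; linarith
  have hym2 : ym ≤ y := by simp only [hymdef]; linarith
  have hym3 : ym < ySeq a (k + 1) := lt_of_le_of_lt hym2 h2
  have hxi : |x - (i : ℝ) * δ| ≤ δ := by
    rw [abs_of_nonneg (by linarith)]
    have : x < (i : ℝ) * δ + δ := by have := hxhi; linarith [hxhi]
    linarith
  have hA : |psi a h l φ x y - psi a h l φ ((i:ℝ) * δ) y| ≤ Dk h l k * δ := by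
    refine le_trans (psi_lip_x ha0 hh0 hl0 hφ01 h1 h2 x ((i:ℝ) * δ)) ?_
    exact mul_le_mul_of_nonneg_left hxi (Dk_nonneg hh0 hl0 k)
  have hB : |psi a h l φ ((i:ℝ) * δ) y - c| ≤ Bm a h φ δ k m := by
    refine le_trans (psi_sub_y ha0 hh0 hh1 hφ01 h1 h2 hym1 hym3 hφmono hym2 ((i:ℝ)*δ)) ?_
    have hymk : ym - ySeq a k = (m : ℝ) * δ := by simp only [hymdef]; ring
    rw [hymk]
    have hφle : φ ((y - ySeq a k) / a ^ (k+1)) ≤ φ (((m:ℝ)+1) * δ / a ^ (k+1)) := by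
      apply hφmono
      apply div_le_div_of_nonneg_right ?_ (pow_pos ha0 (k+1)).le
      linarith
    unfold Bm
    have h2h : (0:ℝ) ≤ 2 * h ^ k := by positivity
    calc (φ ((y - ySeq a k) / a ^ (k+1)) - φ ((m:ℝ) * δ / a ^ (k+1))) * (2 * h ^ k)
        ≤ (φ (((m:ℝ)+1) * δ / a ^ (k+1)) - φ ((m:ℝ) * δ / a ^ (k+1))) * (2 * h ^ k) := by
          apply mul_le_mul_of_nonneg_right ?_ h2h
          linarith
      _ = 2 * h ^ k * (φ (((m:ℝ)+1) * δ / a ^ (k+1)) - φ ((m:ℝ) * δ / a ^ (k+1))) := by ring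
  have habs : |psi a h l φ x y - c| ≤ R := by
    rw [hRdef]
    unfold Rkm
    refine le_min ?_ ?_
    · calc |psi a h l φ x y - c|
          ≤ |psi a h l φ x y - psi a h l φ ((i:ℝ)*δ) y| + |psi a h l φ ((i:ℝ)*δ) y - c| :=
            abs_sub_le _ _ _
        _ ≤ Dk h l k * δ + Bm a h φ δ k m := add_le_add hA hB
    · calc |psi a h l φ x y - c| ≤ |psi a h l φ x y| + |c| := abs_sub _ _
        _ ≤ h ^ k + h ^ k :=
            add_le_add (abs_psi_le_strip ha0 hh0 hh1 hφ01 h1 h2 x)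
              (abs_psi_le_strip ha0 hh0 hh1 hφ01 hym1 hym3 ((i:ℝ)*δ))
        _ = 2 * h ^ k := by ring
  have hR0 : 0 ≤ R := le_trans (abs_nonneg _) habs
  have hparg : 0 ≤ psi a h l φ x y - (c - R) := by
    have := (abs_le.mp habs).1; linarith
  obtain ⟨hplo, hphi⟩ := floor_facts hδ0 hparg
  have hpP : p < Pkm a h l φ δ k m := by
    have hle : (psi a h l φ x y - (c - R)) / δ ≤ 2 * R / δ := by
      have := (abs_le.mp habs).2
      gcongr
      linarith
    have : p ≤ ⌊2 * R / δ⌋₊ := Nat.floor_mono hle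
    exact Nat.lt_succ_of_le this
  refine ⟨(k, i, m, p), ?_⟩
  have hcov : cov a h l φ δ (k, i, m, p) =
      Metric.closedBall (pt ((i : ℝ) * δ) ym (c - R + (p : ℝ) * δ)) (2 * δ) := by
    simp only [cov]
    rw [if_pos hk, if_pos ⟨hiNx, hmNy, hpP⟩]
  rw [hcov, Metric.mem_closedBall]
  apply dist_pt_le hδ0.le hxi
  · rw [abs_of_nonneg (by simp only [hymdef]; linarith)]
    simp only [hymdef]
    linarith
  · rw [abs_of_nonneg (by linarith)]
    linarith
  
lemma cover_band (ha0 : 0 < a) (ha1 : a < 1) (hh0 : 0 < h) (hh1 : h < 1)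
    (hl0 : 0 < l) (hl1 : l < 1)
    (hφ01 : ∀ t, φ t ∈ Set.Icc (0:ℝ) 1) (hδ0 : 0 < δ)
    {x y : ℝ} (hx0 : 0 ≤ x) (hxπ : x ≤ π)
    (hy : ySeq a (Kst a h l δ) ≤ y) (hyI : y ≤ yInf a) :
    ∃ q, pt x y (psi a h l φ x y) ∈ cov a h l φ δ q := by
  set K := Kst a h l δ with hKdef
  set i := ⌊x / δ⌋₊ with hidef
  set m := ⌊(y - ySeq a K) / δ⌋₊ with hmdef
  obtain ⟨hxlo, hxhi⟩ := floor_facts hδ0 hx0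
  have hy0 : (0:ℝ) ≤ y - ySeq a K := by linarith
  obtain ⟨hmlo, hmhi⟩ := floor_facts hδ0 hy0
  have hiNx : i < Nx δ := by
    have : (⌊x / δ⌋₊ : ℕ) ≤ ⌊π / δ⌋₊ := Nat.floor_mono (by gcongr)
    exact Nat.lt_succ_of_le this
  have hmNy : m < ⌊(yInf a - ySeq a K) / δ⌋₊ + 1 := by
    have : (⌊(y - ySeq a K) / δ⌋₊ : ℕ) ≤ ⌊(yInf a - ySeq a K) / δ⌋₊ :=
      Nat.floor_mono (by gcongr)
    exact Nat.lt_succ_of_le this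
  have hψ : |psi a h l φ x y| ≤ h ^ K := by
    by_cases hex : ∃ k : ℕ, ySeq a k ≤ y ∧ y < ySeq a (k + 1)
    · obtain ⟨k', hs1, hs2⟩ := hex
      have hKk : K ≤ k' := by
        by_contra hlt
        push_neg at hlt
        have : k' + 1 ≤ K := hlt
        have := (ySeq_strictMono ha0).monotone this
        linarith
      calc |psi a h l φ x y| ≤ h ^ k' := abs_psi_le_strip ha0 hh0 hh1 hφ01 hs1 hs2 x
        _ ≤ h ^ K := pow_le_pow_of_le_one hh0.le hh1.le hKk
    · rw [psi_eq_zero a h l φ hex x]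
      simp only [abs_zero]
      positivity
  have hψδ : |psi a h l φ x y| ≤ δ := by
    have hKs := (Kst_spec ha0 ha1 hh0 hh1 hl0 hl1 hδ0).2.2
    exact le_trans hψ (le_of_lt hKs)
  refine ⟨(K, i, m, 0), ?_⟩
  have hcov : cov a h l φ δ (K, i, m, 0) =
      Metric.closedBall (pt ((i : ℝ) * δ) (ySeq a K + (m : ℝ) * δ) 0) (2 * δ) := by
    simp only [cov]
    rw [if_neg (lt_irrefl K), if_pos ⟨rfl, hiNx, hmNy, trivial⟩]
  rw [hcov, Metric.mem_closedBall]
  apply dist_pt_le hδ0.le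
  · rw [abs_of_nonneg (by linarith)]
    linarith
  · rw [abs_of_nonneg (by linarith)]
    linarith
  · simpa using hψδ

end Cover

/- ### tsum helpers -/

lemma tsum_ite_lt_fun (N : ℕ) (f : ℕ → ℝ≥0∞) :
    ∑' n : ℕ, (if n < N then f n else 0) = ∑ n ∈ Finset.range N, f n := by
  rw [tsum_eq_sum (s := Finset.range N) (fun b hb => if_neg (by simpa using hb))]
  exact Finset.sum_congr rfl fun n hn => if_pos (Finset.mem_range.mp hn)

lemma tsum_ite_lt_const (N : ℕ) (c : ℝ≥0∞) :
    ∑' n : ℕ, (if n < N then c else 0) = N * c := by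
  rw [tsum_ite_lt_fun N (fun _ => c), Finset.sum_const, Finset.card_range, nsmul_eq_mul]

lemma tsum_ite_pull {C : Prop} [Decidable C] (f : ℕ → ℝ≥0∞) :
    ∑' n : ℕ, (if C then f n else 0) = if C then ∑' n, f n else 0 := by
  split_ifs <;> simp

lemma cov_diam_le {a h l δ : ℝ} {φ : ℝ → ℝ} (hδ : 0 ≤ δ) (q : ℕ × ℕ × ℕ × ℕ) :
    EMetric.diam (cov a h l φ δ q) ≤ ENNReal.ofReal (4 * δ) := by
  unfold cov
  split_ifs
  · exact ediam_ball_le hδ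
  · simp [EMetric.diam, Metric.ediam_empty]
  · exact ediam_ball_le hδ
  · simp [EMetric.diam, Metric.ediam_empty]

/- ### real cost estimates -/

section Cost

variable {a h l δ : ℝ} {φ : ℝ → ℝ}

lemma Nx_le (hδ0 : 0 < δ) (hδ1 : δ ≤ 1) : (Nx δ : ℝ) ≤ (π + 1) / δ := by
  unfold Nx
  push_cast
  have h1 : (⌊π / δ⌋₊ : ℝ) ≤ π / δ := Nat.floor_le (by positivity)
  have h2 : (1:ℝ) ≤ 1 / δ := by rw [le_div_iff₀ hδ0]; linarith
  have : (π + 1) / δ = π / δ + 1 / δ := by ring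
  linarith

lemma Bm_nonneg (hh0 : 0 < h) (hφmono : Monotone φ) (hδ0 : 0 ≤ δ) (ha0 : 0 < a) (k m : ℕ) :
    0 ≤ Bm a h φ δ k m := by
  unfold Bm
  have : φ ((m : ℝ) * δ / a ^ (k + 1)) ≤ φ (((m : ℝ) + 1) * δ / a ^ (k + 1)) := by
    apply hφmono
    apply div_le_div_of_nonneg_right ?_ (pow_pos ha0 (k+1)).le
    nlinarith
  nlinarith [pow_pos hh0 k]

lemma Rkm_nonneg (hh0 : 0 < h) (hl0 : 0 < l) (hφmono : Monotone φ) (hδ0 : 0 ≤ δ)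
    (ha0 : 0 < a) (k m : ℕ) : 0 ≤ Rkm a h l φ δ k m := by
  unfold Rkm
  refine le_min ?_ (by positivity)
  have h1 := Bm_nonneg hh0 hφmono hδ0 ha0 k m
  have h2 : 0 ≤ Dk h l k * δ := mul_nonneg (Dk_nonneg hh0 hl0 k) hδ0
  linarith

lemma sum_Bm_le (hh0 : 0 < h) (hφ01 : ∀ t, φ t ∈ Set.Icc (0:ℝ) 1) (N : ℕ) (ha0 : 0 < a) (k : ℕ) :
    ∑ m ∈ Finset.range N, Bm a h φ δ k m ≤ 2 * h ^ k := by
  have hBm : ∀ m : ℕ, Bm a h φ δ k m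
      = 2 * h ^ k * ((fun m : ℕ => φ ((m : ℝ) * δ / a ^ (k+1))) (m+1)
        - (fun m : ℕ => φ ((m : ℝ) * δ / a ^ (k+1))) m) := by
    intro m
    unfold Bm
    push_cast
    ring_nf
  calc ∑ m ∈ Finset.range N, Bm a h φ δ k m
      = 2 * h ^ k * ∑ m ∈ Finset.range N,
          ((fun m : ℕ => φ ((m : ℝ) * δ / a ^ (k+1))) (m+1)
            - (fun m : ℕ => φ ((m : ℝ) * δ / a ^ (k+1))) m) := by
        rw [Finset.mul_sum]
        exact Finset.sum_congr rfl fun m _ => hBm m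
    _ = 2 * h ^ k * (φ ((N : ℝ) * δ / a ^ (k+1)) - φ ((0 : ℝ) * δ / a ^ (k+1))) := by
        rw [Finset.sum_range_sub (fun m : ℕ => φ ((m : ℝ) * δ / a ^ (k+1)))]
        norm_num
    _ ≤ 2 * h ^ k * (1 - 0) := by
        have h1 := (hφ01 ((N : ℝ) * δ / a ^ (k+1))).2
        have h2 := (hφ01 ((0 : ℝ) * δ / a ^ (k+1))).1
        have : (0:ℝ) ≤ 2 * h ^ k := by positivity
        nlinarith
    _ = 2 * h ^ k := by ring

set_option maxHeartbeats 1000000 in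
lemma strip_cost (ha0 : 0 < a) (ha1 : a < 1) (hh0 : 0 < h) (hh1 : h < 1)
    (hl0 : 0 < l) (hl1 : l < 1)
    (hφ01 : ∀ t, φ t ∈ Set.Icc (0:ℝ) 1) (hφmono : Monotone φ)
    (hδ0 : 0 < δ) (hδ1 : δ ≤ 1) {k : ℕ}
    (hdisj : δ ≤ a ^ (k+1) ∨ δ ≤ l ^ (k+1) ∨ δ ≤ h ^ k) :
    (Nx δ : ℝ) * (∑ m ∈ Finset.range (Ny a δ k), (Pkm a h l φ δ k m : ℝ)) * (16 * δ ^ 2)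
      ≤ 160 * (π + 1) * (a ^ (k+1) * Dk h l k + h ^ k + a ^ (k+1) + l ^ (k+1)) := by
  have hπ : (0:ℝ) < π := Real.pi_pos
  set A := a ^ (k+1) with hA
  set L := l ^ (k+1) with hL
  set H := h ^ k with hH
  set Dv := Dk h l k with hDv
  have hA0 : 0 < A := pow_pos ha0 _
  have hL0 : 0 < L := pow_pos hl0 _
  have hH0 : 0 < H := pow_pos hh0 _
  have hDv0 : 0 ≤ Dv := Dk_nonneg hh0 hl0 k
  set minv := min (Dv * δ) (2 * H) with hminv
  have hminv0 : 0 ≤ minv := le_min (by positivity) (by positivity)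
  -- R ≤ minv + Bm
  have hRle : ∀ m, Rkm a h l φ δ k m ≤ minv + Bm a h φ δ k m := by
    intro m
    unfold Rkm
    have hB0 := Bm_nonneg hh0 hφmono hδ0.le ha0 k m
    rcases le_total (Dv * δ) (2 * H) with hc | hc
    · have : min (Dv * δ + Bm a h φ δ k m) (2 * H) ≤ Dv * δ + Bm a h φ δ k m := min_le_left _ _
      have hm : minv = Dv * δ := min_eq_left hc
      rw [hm]; linarith
    · have : min (Dv * δ + Bm a h φ δ k m) (2 * H) ≤ 2 * H := min_le_right _ _
      have hm : minv = 2 * H := min_eq_right hc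
      rw [hm]; linarith
  -- P ≤ 2R/δ + 1
  have hP : ∀ m, (Pkm a h l φ δ k m : ℝ) ≤ 2 * Rkm a h l φ δ k m / δ + 1 := by
    intro m
    unfold Pkm
    push_cast
    have hR0 := Rkm_nonneg hh0 hl0 hφmono hδ0.le ha0 k m
    have := Nat.floor_le (show 0 ≤ 2 * Rkm a h l φ δ k m / δ by positivity)
    linarith
  -- sum of P
  set NyR := (Ny a δ k : ℝ) with hNyR
  have hNyR0 : 0 ≤ NyR := Nat.cast_nonneg _
  have hNy_le : NyR ≤ A / δ + 1 := by
    rw [hNyR]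
    unfold Ny
    push_cast
    have := Nat.floor_le (show 0 ≤ A / δ by positivity)
    linarith
  have hsumR : ∑ m ∈ Finset.range (Ny a δ k), Rkm a h l φ δ k m ≤ NyR * minv + 2 * H := by
    calc ∑ m ∈ Finset.range (Ny a δ k), Rkm a h l φ δ k m
        ≤ ∑ m ∈ Finset.range (Ny a δ k), (minv + Bm a h φ δ k m) :=
          Finset.sum_le_sum fun m _ => hRle m
      _ = NyR * minv + ∑ m ∈ Finset.range (Ny a δ k), Bm a h φ δ k m := by
          rw [Finset.sum_add_distrib, Finset.sum_const, Finset.card_range, nsmul_eq_mul]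
      _ ≤ NyR * minv + 2 * H := by
          have := sum_Bm_le (δ := δ) hh0 hφ01 (Ny a δ k) ha0 k
          linarith
  have hsumP : ∑ m ∈ Finset.range (Ny a δ k), (Pkm a h l φ δ k m : ℝ)
      ≤ (2 / δ) * (NyR * minv + 2 * H) + NyR := by
    calc ∑ m ∈ Finset.range (Ny a δ k), (Pkm a h l φ δ k m : ℝ)
        ≤ ∑ m ∈ Finset.range (Ny a δ k), (2 * Rkm a h l φ δ k m / δ + 1) :=
          Finset.sum_le_sum fun m _ => hP m
      _ = (2 / δ) * (∑ m ∈ Finset.range (Ny a δ k), Rkm a h l φ δ k m) + NyR := by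
          rw [Finset.sum_add_distrib, Finset.sum_const, Finset.card_range, nsmul_eq_mul,
            Finset.mul_sum]
          congr 1
          · exact Finset.sum_congr rfl fun m _ => by ring
          · rw [hNyR]; ring
      _ ≤ (2 / δ) * (NyR * minv + 2 * H) + NyR := by
          have h2δ : 0 ≤ 2 / δ := by positivity
          have := mul_le_mul_of_nonneg_left hsumR h2δ
          linarith
  -- key quantitative bounds
  have hminv_le : minv ≤ A * Dv + 2 * H := by
    rcases hdisj with hd | hd | hd
    · calc minv ≤ Dv * δ := min_le_left _ _
        _ ≤ Dv * A := mul_le_mul_of_nonneg_left hd hDv0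
        _ ≤ A * Dv + 2 * H := by nlinarith
    · calc minv ≤ Dv * δ := min_le_left _ _
        _ ≤ Dv * L := mul_le_mul_of_nonneg_left hd hDv0
        _ ≤ 2 * H := by
            rw [hDv, hL, hH]
            unfold Dk
            have e1 : (h / l) ^ k * l ^ (k+1) = h ^ k * l := by
              rw [div_pow]
              field_simp
              ring
            have e2 : (h / l) ^ (k+1) * l ^ (k+1) = h ^ (k+1) := by
              rw [div_pow]
              field_simp
            have hhk1 : h ^ (k+1) ≤ h ^ k :=
              pow_le_pow_of_le_one hh0.le hh1.le (Nat.le_succ k)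
            have hlk : h ^ k * l ≤ h ^ k := by nlinarith [pow_pos hh0 k]
            calc ((h/l)^k + (h/l)^(k+1)) * l^(k+1)
                = (h/l)^k * l^(k+1) + (h/l)^(k+1) * l^(k+1) := by ring
              _ = h ^ k * l + h ^ (k+1) := by rw [e1, e2]
              _ ≤ 2 * h ^ k := by linarith
        _ ≤ A * Dv + 2 * H := by nlinarith
    · calc minv ≤ 2 * H := min_le_right _ _
        _ ≤ A * Dv + 2 * H := by nlinarith
  have hNymin : NyR * minv ≤ 2 * (A * Dv) + 2 * H := by
    calc NyR * minv ≤ (A / δ + 1) * minv := mul_le_mul_of_nonneg_right hNy_le hminv0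
      _ = (A / δ) * minv + minv := by ring
      _ ≤ (A / δ) * (Dv * δ) + (A * Dv + 2 * H) := by
          have h1 : (A / δ) * minv ≤ (A / δ) * (Dv * δ) :=
            mul_le_mul_of_nonneg_left (min_le_left _ _) (by positivity)
          linarith
      _ = A * Dv + (A * Dv + 2 * H) := by
          have : (A / δ) * (Dv * δ) = A * Dv := by field_simp
          rw [this]
      _ = 2 * (A * Dv) + 2 * H := by ring
  have hδ_le : δ ≤ A + L + H := by
    rcases hdisj with hd | hd | hd <;> [linarith; linarith; linarith]
  have hδNy : δ * NyR ≤ A + (A + L + H) := by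
    calc δ * NyR ≤ δ * (A / δ + 1) := mul_le_mul_of_nonneg_left hNy_le hδ0.le
      _ = A + δ := by field_simp
      _ ≤ A + (A + L + H) := by linarith
  -- assemble
  set SP := ∑ m ∈ Finset.range (Ny a δ k), (Pkm a h l φ δ k m : ℝ) with hSP
  have hSP0 : 0 ≤ SP := Finset.sum_nonneg fun m _ => Nat.cast_nonneg _
  have hNxb := Nx_le hδ0 hδ1
  calc (Nx δ : ℝ) * SP * (16 * δ ^ 2)
      ≤ ((π + 1) / δ) * SP * (16 * δ ^ 2) := by
        apply mul_le_mul_of_nonneg_right (mul_le_mul_of_nonneg_right hNxb hSP0) (by positivity)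
    _ = 16 * (π + 1) * (δ * SP) := by field_simp
    _ ≤ 16 * (π + 1) * (δ * ((2 / δ) * (NyR * minv + 2 * H) + NyR)) := by
        have hmul : δ * SP ≤ δ * ((2 / δ) * (NyR * minv + 2 * H) + NyR) :=
          mul_le_mul_of_nonneg_left hsumP hδ0.le
        have : (0:ℝ) ≤ 16 * (π + 1) := by positivity
        exact mul_le_mul_of_nonneg_left hmul this
    _ = 16 * (π + 1) * (2 * (NyR * minv + 2 * H) + δ * NyR) := by
        have : δ * ((2 / δ) * (NyR * minv + 2 * H) + NyR)
            = 2 * (NyR * minv + 2 * H) + δ * NyR := by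
          field_simp
        rw [this]
    _ ≤ 16 * (π + 1) * (2 * ((2 * (A * Dv) + 2 * H) + 2 * H) + (A + (A + L + H))) := by
        have h16 : (0:ℝ) ≤ 16 * (π + 1) := by positivity
        apply mul_le_mul_of_nonneg_left ?_ h16
        linarith
    _ ≤ 160 * (π + 1) * (A * Dv + H + A + L) := by
        have hAD : 0 ≤ A * Dv := by positivity
        nlinarith [hπ]

lemma band_cost (ha0 : 0 < a) (ha1 : a < 1) (hh0 : 0 < h) (hh1 : h < 1)
    (hl0 : 0 < l) (hl1 : l < 1) (hδ0 : 0 < δ) (hδ1 : δ ≤ 1) :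
    (Nx δ : ℝ) * ((⌊(yInf a - ySeq a (Kst a h l δ)) / δ⌋₊ + 1 : ℕ) : ℝ) * (16 * δ ^ 2)
      ≤ 16 * (π + 1) * ((1 - a)⁻¹ + 1) := by
  have hπ : (0:ℝ) < π := Real.pi_pos
  have h1a : (0:ℝ) < 1 - a := by linarith
  have hKa : a ^ (Kst a h l δ + 1) ≤ δ := (Kst_spec ha0 ha1 hh0 hh1 hl0 hl1 hδ0).1.le
  have hYS : yInf a - ySeq a (Kst a h l δ) ≤ δ / (1 - a) := by
    rw [yInf_sub_ySeq ha1]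
    apply div_le_div_of_nonneg_right hKa h1a.le |>.trans
    exact le_refl _
  have hNyB : ((⌊(yInf a - ySeq a (Kst a h l δ)) / δ⌋₊ + 1 : ℕ) : ℝ) ≤ (1 - a)⁻¹ + 1 := by
    push_cast
    have hfl : (⌊(yInf a - ySeq a (Kst a h l δ)) / δ⌋₊ : ℝ)
        ≤ (yInf a - ySeq a (Kst a h l δ)) / δ := by
      apply Nat.floor_le
      have h0 : 0 ≤ yInf a - ySeq a (Kst a h l δ) := by
        rw [yInf_sub_ySeq ha1]; positivity
      positivity
    have h2 : (yInf a - ySeq a (Kst a h l δ)) / δ ≤ (δ / (1 - a)) / δ :=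
      div_le_div_of_nonneg_right hYS hδ0.le
    have h3 : (δ / (1 - a)) / δ = (1 - a)⁻¹ := by field_simp
    linarith
  have hNxb := Nx_le hδ0 hδ1
  have hNyB0 : (0:ℝ) ≤ ((⌊(yInf a - ySeq a (Kst a h l δ)) / δ⌋₊ + 1 : ℕ) : ℝ) :=
    Nat.cast_nonneg _
  have hia : (0:ℝ) ≤ (1 - a)⁻¹ + 1 := by positivity
  calc (Nx δ : ℝ) * ((⌊(yInf a - ySeq a (Kst a h l δ)) / δ⌋₊ + 1 : ℕ) : ℝ) * (16 * δ ^ 2)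
      ≤ ((π + 1) / δ) * ((1 - a)⁻¹ + 1) * (16 * δ ^ 2) := by
        apply mul_le_mul_of_nonneg_right ?_ (by positivity)
        exact mul_le_mul hNxb hNyB hNyB0 (by positivity)
    _ = 16 * (π + 1) * ((1 - a)⁻¹ + 1) * δ := by field_simp
    _ ≤ 16 * (π + 1) * ((1 - a)⁻¹ + 1) * 1 := by
        apply mul_le_mul_of_nonneg_left hδ1 (by positivity)
    _ = 16 * (π + 1) * ((1 - a)⁻¹ + 1) := mul_one _

end Cost

/- ### geometric sums -/

def gk (a h l : ℝ) (k : ℕ) : ℝ := a ^ (k+1) * Dk h l k + h ^ k + a ^ (k+1) + l ^ (k+1)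

def Ctot (a h l : ℝ) : ℝ :=
  160 * (π + 1) * ((a + a * h / l) * (1 - a * h / l)⁻¹ + (1 - h)⁻¹ + a * (1 - a)⁻¹
    + l * (1 - l)⁻¹) + 16 * (π + 1) * ((1 - a)⁻¹ + 1)

lemma geom_le {ρ : ℝ} (h0 : 0 ≤ ρ) (h1 : ρ < 1) (K : ℕ) :
    ∑ k ∈ Finset.range K, ρ ^ k ≤ (1 - ρ)⁻¹ := by
  have hs := summable_geometric_of_lt_one h0 h1
  calc ∑ k ∈ Finset.range K, ρ ^ k ≤ ∑' k : ℕ, ρ ^ k :=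
        Summable.sum_le_tsum _ (fun k _ => pow_nonneg h0 k) hs
    _ = (1 - ρ)⁻¹ := tsum_geometric_of_lt_one h0 h1

lemma sum_gk_le {a h l : ℝ} (ha0 : 0 < a) (ha1 : a < 1) (hh0 : 0 < h) (hh1 : h < 1)
    (hl0 : 0 < l) (hl1 : l < 1) (hahl : a * h < l) (K : ℕ) :
    ∑ k ∈ Finset.range K, gk a h l k
      ≤ (a + a * h / l) * (1 - a * h / l)⁻¹ + (1 - h)⁻¹ + a * (1 - a)⁻¹ + l * (1 - l)⁻¹ := by
  set r := a * h / l with hr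
  have hr0 : 0 ≤ r := by positivity
  have hr1 : r < 1 := (div_lt_one hl0).mpr hahl
  have hgk : ∀ k : ℕ, gk a h l k = (a + r) * r ^ k + h ^ k + a * a ^ k + l * l ^ k := by
    intro k
    unfold gk Dk
    have hlne : l ≠ 0 := ne_of_gt hl0
    rw [hr]
    rw [div_pow, div_pow, div_pow]
    field_simp
    ring
  calc ∑ k ∈ Finset.range K, gk a h l k
      = (a + r) * ∑ k ∈ Finset.range K, r ^ k + ∑ k ∈ Finset.range K, h ^ k
        + a * ∑ k ∈ Finset.range K, a ^ k + l * ∑ k ∈ Finset.range K, l ^ k := by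
        rw [Finset.mul_sum, Finset.mul_sum, Finset.mul_sum, ← Finset.sum_add_distrib,
          ← Finset.sum_add_distrib, ← Finset.sum_add_distrib]
        exact Finset.sum_congr rfl fun k _ => by rw [hgk k]
    _ ≤ (a + r) * (1 - r)⁻¹ + (1 - h)⁻¹ + a * (1 - a)⁻¹ + l * (1 - l)⁻¹ := by
        have g1 := geom_le hr0 hr1 K
        have g2 := geom_le (le_of_lt hh0) hh1 K
        have g3 := geom_le (le_of_lt ha0) ha1 K
        have g4 := geom_le (le_of_lt hl0) hl1 K
        have har : 0 ≤ a + r := by positivity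
        have t1 : (a + r) * ∑ k ∈ Finset.range K, r ^ k ≤ (a + r) * (1 - r)⁻¹ :=
          mul_le_mul_of_nonneg_left g1 har
        have t3 : a * ∑ k ∈ Finset.range K, a ^ k ≤ a * (1 - a)⁻¹ :=
          mul_le_mul_of_nonneg_left g3 ha0.le
        have t4 : l * ∑ k ∈ Finset.range K, l ^ k ≤ l * (1 - l)⁻¹ :=
          mul_le_mul_of_nonneg_left g4 hl0.le
        linarith

/- ### the total sum bound -/

set_option maxHeartbeats 1000000 in
lemma cov_tsum_le {a h l δ : ℝ} {φ : ℝ → ℝ}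
    (ha0 : 0 < a) (ha1 : a < 1) (hh0 : 0 < h) (hh1 : h < 1)
    (hl0 : 0 < l) (hl1 : l < 1) (hahl : a * h < l)
    (hφ01 : ∀ t, φ t ∈ Set.Icc (0:ℝ) 1) (hφmono : Monotone φ)
    (hδ0 : 0 < δ) (hδ1 : δ ≤ 1) :
    ∑' q : ℕ × ℕ × ℕ × ℕ, EMetric.diam (cov a h l φ δ q) ^ (2:ℝ)
      ≤ ENNReal.ofReal (Ctot a h l) := by
  classical
  set c : ℝ≥0∞ := ENNReal.ofReal (16 * δ ^ 2) with hc
  set K := Kst a h l δ with hK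
  set NB : ℕ := ⌊(yInf a - ySeq a K) / δ⌋₊ + 1 with hNB
  set g : ℕ × ℕ × ℕ × ℕ → ℝ≥0∞ := fun q =>
    if q.1 < K then
      (if q.2.1 < Nx δ then
        (if q.2.2.1 < Ny a δ q.1 then
          (if q.2.2.2 < Pkm a h l φ δ q.1 q.2.2.1 then c else 0) else 0) else 0)
    else if q.1 = K then
      (if q.2.1 < Nx δ then (if q.2.2.1 < NB then (if q.2.2.2 = 0 then c else 0) else 0) else 0)
    else 0 with hg
  -- pointwise bound
  have hball : ∀ ctr : E3, EMetric.diam (Metric.closedBall ctr (2 * δ)) ^ (2:ℝ) ≤ c := by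
    intro ctr
    have h2 : ((2:ℝ)) = ((2:ℕ) : ℝ) := by norm_num
    rw [h2, ENNReal.rpow_natCast]
    calc EMetric.diam (Metric.closedBall ctr (2 * δ)) ^ (2:ℕ)
        ≤ ENNReal.ofReal (4 * δ) ^ (2:ℕ) := by
          gcongr
          exact ediam_ball_le hδ0.le
      _ = ENNReal.ofReal ((4 * δ) ^ (2:ℕ)) := (ENNReal.ofReal_pow (by positivity) 2).symm
      _ = c := by rw [hc]; norm_num; ring_nf; rw [ENNReal.ofReal_mul (by positivity), ENNReal.ofReal_ofNat]
  have hpt : ∀ q, EMetric.diam (cov a h l φ δ q) ^ (2:ℝ) ≤ g q := by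
    intro q
    by_cases h1 : q.1 < K
    · by_cases h2 : q.2.1 < Nx δ ∧ q.2.2.1 < Ny a δ q.1 ∧ q.2.2.2 < Pkm a h l φ δ q.1 q.2.2.1
      · have hcov : cov a h l φ δ q = Metric.closedBall
            (pt ((q.2.1 : ℝ) * δ) (ySeq a q.1 + (q.2.2.1 : ℝ) * δ)
              (psi a h l φ ((q.2.1 : ℝ) * δ) (ySeq a q.1 + (q.2.2.1 : ℝ) * δ)
                - Rkm a h l φ δ q.1 q.2.2.1 + (q.2.2.2 : ℝ) * δ)) (2 * δ) := by
          unfold cov; rw [if_pos h1, if_pos h2]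
        have hgq : g q = c := by
          simp only [hg, if_pos h1, if_pos h2.1, if_pos h2.2.1, if_pos h2.2.2]
        rw [hcov, hgq]
        exact hball _
      · have hcov : cov a h l φ δ q = ∅ := by
          unfold cov; rw [if_pos h1, if_neg h2]
        rw [hcov]
        simp [ENNReal.zero_rpow_of_pos, EMetric.diam, Metric.ediam_empty]
    · by_cases h2 : q.1 = K ∧ q.2.1 < Nx δ ∧ q.2.2.1 < NB ∧ q.2.2.2 = 0
      · have hcov : cov a h l φ δ q = Metric.closedBall
            (pt ((q.2.1 : ℝ) * δ) (ySeq a K + (q.2.2.1 : ℝ) * δ) 0) (2 * δ) := by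
          unfold cov
          rw [if_neg h1, if_pos (show q.1 = K ∧ q.2.1 < Nx δ
            ∧ q.2.2.1 < ⌊(yInf a - ySeq a K) / δ⌋₊ + 1 ∧ q.2.2.2 = 0 from h2)]
        have hgq : g q = c := by
          simp only [hg, if_neg h1, if_pos h2.1, if_pos h2.2.1, if_pos h2.2.2.1,
            if_pos h2.2.2.2]
        rw [hcov, hgq]
        exact hball _
      · have hcov : cov a h l φ δ q = ∅ := by
          unfold cov
          rw [if_neg h1, if_neg (show ¬(q.1 = K ∧ q.2.1 < Nx δ
            ∧ q.2.2.1 < ⌊(yInf a - ySeq a K) / δ⌋₊ + 1 ∧ q.2.2.2 = 0) from h2)]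
        rw [hcov]
        simp [ENNReal.zero_rpow_of_pos, EMetric.diam, Metric.ediam_empty]
  refine le_trans (ENNReal.tsum_le_tsum hpt) ?_
  -- evaluate the sum of g
  have e1 : ∑' q : ℕ × ℕ × ℕ × ℕ, g q
      = ∑' k : ℕ, ∑' i : ℕ, ∑' m : ℕ, ∑' p : ℕ, g (k, i, m, p) := by
    rw [ENNReal.tsum_prod']
    refine tsum_congr fun k => ?_
    rw [ENNReal.tsum_prod']
    refine tsum_congr fun i => ?_
    rw [ENNReal.tsum_prod']
  rw [e1]
  set F : ℕ → ℝ≥0∞ := fun k => ∑' i : ℕ, ∑' m : ℕ, ∑' p : ℕ, g (k, i, m, p) with hF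
  have hFlt : ∀ k, k < K → F k
      = (Nx δ : ℝ≥0∞) * ∑ m ∈ Finset.range (Ny a δ k), ((Pkm a h l φ δ k m : ℝ≥0∞) * c) := by
    intro k hk
    rw [hF]
    simp only [hg, if_pos hk]
    have inner : ∀ i, (∑' m : ℕ, ∑' p : ℕ,
        (if i < Nx δ then (if m < Ny a δ k then
          (if p < Pkm a h l φ δ k m then c else 0) else 0) else 0))
        = (if i < Nx δ then ∑ m ∈ Finset.range (Ny a δ k), ((Pkm a h l φ δ k m : ℝ≥0∞) * c)
            else 0) := by
      intro i
      by_cases hi : i < Nx δ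
      · simp only [if_pos hi]
        rw [← tsum_ite_lt_fun]
        refine tsum_congr fun m => ?_
        by_cases hm : m < Ny a δ k
        · simp only [if_pos hm]
          exact tsum_ite_lt_const _ _
        · simp only [if_neg hm, tsum_zero]
      · simp only [if_neg hi, tsum_zero]
    calc ∑' i : ℕ, ∑' m : ℕ, ∑' p : ℕ,
          (if i < Nx δ then (if m < Ny a δ k then
            (if p < Pkm a h l φ δ k m then c else 0) else 0) else 0)
        = ∑' i : ℕ, (if i < Nx δ then
            ∑ m ∈ Finset.range (Ny a δ k), ((Pkm a h l φ δ k m : ℝ≥0∞) * c) else 0) :=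
          tsum_congr fun i => inner i
      _ = (Nx δ : ℝ≥0∞) * ∑ m ∈ Finset.range (Ny a δ k), ((Pkm a h l φ δ k m : ℝ≥0∞) * c) :=
          tsum_ite_lt_const _ _
  have hFK : F K = (Nx δ : ℝ≥0∞) * ((NB : ℝ≥0∞) * c) := by
    have hgK : ∀ i m p : ℕ, g (K, i, m, p)
        = (if i < Nx δ then (if m < NB then (if p = 0 then c else 0) else 0) else 0) := by
      intro i m p
      simp only [hg]
      rw [if_neg (lt_irrefl K)]
      simp only [if_pos (rfl : K = K), ite_true, eq_self_iff_true]
    have inner : ∀ i, (∑' m : ℕ, ∑' p : ℕ, g (K, i, m, p))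
        = (if i < Nx δ then (NB : ℝ≥0∞) * c else 0) := by
      intro i
      have step1 : (∑' m : ℕ, ∑' p : ℕ, g (K, i, m, p))
          = ∑' m : ℕ, ∑' p : ℕ,
            (if i < Nx δ then (if m < NB then (if p = 0 then c else 0) else 0) else 0) :=
        tsum_congr fun m => tsum_congr fun p => hgK i m p
      rw [step1]
      by_cases hi : i < Nx δ
      · simp only [if_pos hi]
        have hin : ∀ m : ℕ, (∑' p : ℕ, (if m < NB then (if p = 0 then c else 0) else 0))
            = (if m < NB then c else 0) := by
          intro m
          by_cases hm : m < NB
          · simp only [if_pos hm]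
            exact tsum_ite_eq 0 (fun _ => c)
          · simp only [if_neg hm, tsum_zero]
        calc ∑' m : ℕ, ∑' p : ℕ, (if m < NB then (if p = 0 then c else 0) else 0)
            = ∑' m : ℕ, (if m < NB then c else 0) := tsum_congr hin
          _ = (NB : ℝ≥0∞) * c := tsum_ite_lt_const _ _
      · simp only [if_neg hi, tsum_zero]
    calc F K = ∑' i : ℕ, (if i < Nx δ then (NB : ℝ≥0∞) * c else 0) := tsum_congr inner
      _ = (Nx δ : ℝ≥0∞) * ((NB : ℝ≥0∞) * c) := tsum_ite_lt_const _ _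
  have hF0 : ∀ k, K < k → F k = 0 := by
    intro k hk
    rw [hF]
    have h1 : ¬ k < K := by omega
    have h2 : ¬ k = K := by omega
    simp only [hg, if_neg h1, if_neg h2, tsum_zero]
  have e2 : ∑' k : ℕ, F k = ∑ k ∈ Finset.range (K + 1), F k := by
    apply tsum_eq_sum
    intro k hk
    have h' : ¬ k < K + 1 := fun hcon => hk (Finset.mem_range.mpr hcon)
    exact hF0 k (by omega)
  rw [e2, Finset.sum_range_succ]
  -- conversion to `ofReal`
  have hc16 : (0:ℝ) ≤ 16 * δ ^ 2 := by positivity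
  have hPc : ∀ n : ℕ, ((n : ℝ≥0∞) * c) = ENNReal.ofReal ((n : ℝ) * (16 * δ ^ 2)) := by
    intro n
    rw [hc, ← ENNReal.ofReal_natCast n, ← ENNReal.ofReal_mul (Nat.cast_nonneg n)]
  have hgk0 : ∀ k : ℕ, (0:ℝ) ≤ gk a h l k := by
    intro k
    unfold gk
    have := Dk_nonneg hh0 hl0 k
    have h1 : (0:ℝ) ≤ a ^ (k+1) := by positivity
    have h2 : (0:ℝ) ≤ h ^ k := by positivity
    have h3 : (0:ℝ) ≤ l ^ (k+1) := by positivity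
    nlinarith
  have hπ0 : (0:ℝ) ≤ 160 * (π + 1) := by positivity
  have hofr : ∀ k, k < K → F k ≤ ENNReal.ofReal (160 * (π + 1) * gk a h l k) := by
    intro k hk
    rw [hFlt k hk]
    have e3 : ∑ m ∈ Finset.range (Ny a δ k), ((Pkm a h l φ δ k m : ℝ≥0∞) * c)
        = ENNReal.ofReal (∑ m ∈ Finset.range (Ny a δ k), (Pkm a h l φ δ k m : ℝ) * (16 * δ ^ 2)) := by
      rw [ENNReal.ofReal_sum_of_nonneg (fun m _ => by positivity)]
      exact Finset.sum_congr rfl fun m _ => hPc _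
    rw [e3, ← ENNReal.ofReal_natCast (Nx δ),
      ← ENNReal.ofReal_mul (Nat.cast_nonneg (Nx δ))]
    apply ENNReal.ofReal_le_ofReal
    have e4 : (Nx δ : ℝ) * ∑ m ∈ Finset.range (Ny a δ k), (Pkm a h l φ δ k m : ℝ) * (16 * δ ^ 2)
        = (Nx δ : ℝ) * (∑ m ∈ Finset.range (Ny a δ k), (Pkm a h l φ δ k m : ℝ)) * (16 * δ ^ 2) := by
      rw [← Finset.sum_mul]
      ring
    rw [e4]
    exact strip_cost ha0 ha1 hh0 hh1 hl0 hl1 hφ01 hφmono hδ0 hδ1 (Kst_min hk)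
  have hband : F K ≤ ENNReal.ofReal (16 * (π + 1) * ((1 - a)⁻¹ + 1)) := by
    rw [hFK, hPc NB, ← ENNReal.ofReal_natCast (Nx δ),
      ← ENNReal.ofReal_mul (Nat.cast_nonneg (Nx δ))]
    apply ENNReal.ofReal_le_ofReal
    have e5 : (Nx δ : ℝ) * ((NB : ℝ) * (16 * δ ^ 2)) = (Nx δ : ℝ) * (NB : ℝ) * (16 * δ ^ 2) := by
      ring
    rw [e5, hNB]
    exact band_cost ha0 ha1 hh0 hh1 hl0 hl1 hδ0 hδ1
  have hsumF : ∑ k ∈ Finset.range K, F k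
      ≤ ENNReal.ofReal (160 * (π + 1) * ((a + a * h / l) * (1 - a * h / l)⁻¹ + (1 - h)⁻¹
        + a * (1 - a)⁻¹ + l * (1 - l)⁻¹)) := by
    calc ∑ k ∈ Finset.range K, F k
        ≤ ∑ k ∈ Finset.range K, ENNReal.ofReal (160 * (π + 1) * gk a h l k) :=
          Finset.sum_le_sum fun k hk => hofr k (Finset.mem_range.mp hk)
      _ = ENNReal.ofReal (∑ k ∈ Finset.range K, 160 * (π + 1) * gk a h l k) :=
          (ENNReal.ofReal_sum_of_nonneg (fun k _ => mul_nonneg hπ0 (hgk0 k))).symm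
      _ ≤ ENNReal.ofReal (160 * (π + 1) * ((a + a * h / l) * (1 - a * h / l)⁻¹ + (1 - h)⁻¹
            + a * (1 - a)⁻¹ + l * (1 - l)⁻¹)) := by
          apply ENNReal.ofReal_le_ofReal
          rw [← Finset.mul_sum]
          exact mul_le_mul_of_nonneg_left (sum_gk_le ha0 ha1 hh0 hh1 hl0 hl1 hahl K) hπ0
  calc ∑ k ∈ Finset.range K, F k + F K
      ≤ ENNReal.ofReal (160 * (π + 1) * ((a + a * h / l) * (1 - a * h / l)⁻¹ + (1 - h)⁻¹
          + a * (1 - a)⁻¹ + l * (1 - l)⁻¹))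
        + ENNReal.ofReal (16 * (π + 1) * ((1 - a)⁻¹ + 1)) := add_le_add hsumF hband
    _ = ENNReal.ofReal (Ctot a h l) := by
        have h1a : (0:ℝ) < 1 - a := by linarith
        have h1h : (0:ℝ) < 1 - h := by linarith
        have h1l : (0:ℝ) < 1 - l := by linarith
        have hr1 : a * h / l < 1 := (div_lt_one hl0).mpr hahl
        have h1r : (0:ℝ) < 1 - a * h / l := by linarith
        have hr0 : (0:ℝ) ≤ a * h / l := by positivity
        rw [← ENNReal.ofReal_add (by positivity) (by positivity)]
        rfl

/- ### original auxiliary definitions from the statement file -/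

/-- The partial derivative of `ψ` in the first variable. -/
def psi₁ (a h l : ℝ) (φ : ℝ → ℝ) (x y : ℝ) : ℝ :=
  deriv (fun t => psi a h l φ t y) x

/-- The partial derivative of `ψ` in the second variable. -/
def psi₂ (a h l : ℝ) (φ : ℝ → ℝ) (x y : ℝ) : ℝ :=
  deriv (fun s => psi a h l φ x s) y

/-- The arc length `L(x,y) = ∫_0^x √(1 + (∂₁ψ(t,y))²) dt`. -/
def arc (a h l : ℝ) (φ : ℝ → ℝ) (x y : ℝ) : ℝ :=
  ∫ t in (0:ℝ)..x, Real.sqrt (1 + psi₁ a h l φ t y ^ 2)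

/-- The length `L(y) = L(π, y)` of the section of the graph of `ψ` at height `y`. -/
def len (a h l : ℝ) (φ : ℝ → ℝ) (y : ℝ) : ℝ := arc a h l φ π y

/- ### main theorem -/

/-- If moreover `a·h < λ`, then the graph of `ψ` over `[0,π] × [0,y_∞]`, viewed as a
subset of Euclidean `ℝ³`, has finite `2`-dimensional Hausdorff measure. -/
theorem hausdorff_measure_graph_lt_top (a h l : ℝ) (ha0 : 0 < a) (ha1 : a < 1) (hh0 : 0 < h) (hh1 : h < 1)
    (hl0 : 0 < l) (hl1 : l < 1) (hlN : ∃ N : ℕ, 0 < N ∧ l = 1 / N)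
    (φ : ℝ → ℝ) (hφsmooth : ContDiff ℝ (⊤ : ℕ∞) φ) (hφmono : Monotone φ)
    (hφ01 : ∀ t, φ t ∈ Set.Icc (0:ℝ) 1)
    (hφd0 : ∀ t, 0 ≤ deriv φ t) (hφd2 : ∀ t, deriv φ t ≤ 2)
    (hφ0 : ∃ ε > 0, ∀ t < ε, φ t = 0) (hφ1 : ∃ ε > 0, ∀ t > 1 - ε, φ t = 1)
    (hahl : a * h < l) :
    μH[2] ((fun q : ℝ × ℝ =>
        ((WithLp.equiv 2 (Fin 3 → ℝ)).symm ![q.1, q.2, psi a h l φ q.1 q.2] :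
          EuclideanSpace ℝ (Fin 3))) ''
      (Icc 0 π ×ˢ Icc 0 (yInf a))) < ⊤ := by
  set S := ((fun q : ℝ × ℝ =>
      ((WithLp.equiv 2 (Fin 3 → ℝ)).symm ![q.1, q.2, psi a h l φ q.1 q.2] :
        EuclideanSpace ℝ (Fin 3))) '' (Icc 0 π ×ˢ Icc 0 (yInf a))) with hS
  set δn : ℕ → ℝ := fun n => (1/2 : ℝ) ^ n with hδn
  have hδ0 : ∀ n, 0 < δn n := fun n => by rw [hδn]; positivity
  have hδ1 : ∀ n, δn n ≤ 1 := by
    intro n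
    rw [hδn]
    exact pow_le_one₀ (by norm_num) (by norm_num)
  have hcover : ∀ n, S ⊆ ⋃ q : ℕ × ℕ × ℕ × ℕ, cov a h l φ (δn n) q := by
    intro n z hz
    rw [hS] at hz
    obtain ⟨⟨x, y⟩, hmem, rfl⟩ := hz
    have hx0 : 0 ≤ x := hmem.1.1
    have hxπ : x ≤ π := hmem.1.2
    have hy0 : 0 ≤ y := hmem.2.1
    have hyI : y ≤ yInf a := hmem.2.2
    rw [mem_iUnion]
    by_cases hcase : y < ySeq a (Kst a h l (δn n))
    · obtain ⟨k, hkK, h1, h2⟩ := exists_strip_of_lt _ hy0 hcase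
      exact cover_strip ha0 hh0 hh1 hl0 hφ01 hφmono (hδ0 n) hx0 hxπ hkK h1 h2
    · push_neg at hcase
      exact cover_band ha0 ha1 hh0 hh1 hl0 hl1 hφ01 (hδ0 n) hx0 hxπ hcase hyI
  have hr : Tendsto (fun n : ℕ => ENNReal.ofReal (4 * δn n)) atTop (𝓝 0) := by
    have h2 : Tendsto (fun n : ℕ => (1/2 : ℝ) ^ n) atTop (𝓝 0) :=
      tendsto_pow_atTop_nhds_zero_of_lt_one (by norm_num) (by norm_num)
    have h3 : Tendsto (fun n : ℕ => 4 * (1/2 : ℝ) ^ n) atTop (𝓝 (4 * 0)) := h2.const_mul 4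
    rw [mul_zero] at h3
    have h4 : Tendsto (fun n : ℕ => ENNReal.ofReal (4 * δn n)) atTop
        (𝓝 (ENNReal.ofReal 0)) := ENNReal.tendsto_ofReal h3
    rwa [ENNReal.ofReal_zero] at h4
  have hle := MeasureTheory.Measure.hausdorffMeasure_le_liminf_tsum 2 S
    (fun n : ℕ => ENNReal.ofReal (4 * δn n)) hr
    (fun n => cov a h l φ (δn n))
    (Eventually.of_forall fun n => fun q => cov_diam_le (hδ0 n).le q)
    (Eventually.of_forall hcover)
  have hb : ∀ n : ℕ, ∑' q : ℕ × ℕ × ℕ × ℕ,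
      EMetric.diam (cov a h l φ (δn n) q) ^ (2:ℝ) ≤ ENNReal.ofReal (Ctot a h l) :=
    fun n => cov_tsum_le ha0 ha1 hh0 hh1 hl0 hl1 hahl hφ01 hφmono (hδ0 n) (hδ1 n)
  have hlim : liminf (fun n : ℕ => ∑' q : ℕ × ℕ × ℕ × ℕ,
      EMetric.diam (cov a h l φ (δn n) q) ^ (2:ℝ)) atTop ≤ ENNReal.ofReal (Ctot a h l) := by
    calc liminf (fun n : ℕ => ∑' q : ℕ × ℕ × ℕ × ℕ,
          EMetric.diam (cov a h l φ (δn n) q) ^ (2:ℝ)) atTop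
        ≤ liminf (fun _ : ℕ => ENNReal.ofReal (Ctot a h l)) atTop :=
          liminf_le_liminf (Eventually.of_forall hb)
      _ = ENNReal.ofReal (Ctot a h l) := liminf_const _
  exact lt_of_le_of_lt (le_trans hle hlim) ENNReal.ofReal_lt_top

end StokesCounterexample
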